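/- arXiv:2001.06343 — 7 statements merged into one kernel-verified Lean document; each statement's English description precedes it below -/
import Mathlib

section
/- Let a, b, c be affinely independent points in the Euclidean plane and let m_ab, m_bc, m_ac denote the midpoints of the segments ab, bc, ac respectively. Then the union of the convex hulls of {a, m_ab, m_ac}, {m_ab, b, m_bc}, {m_ac, m_bc, c}, and {m_ab, m_bc, m_ac} equals the convex hull of {a, b, c}. (Covering property of the red refinement: the four subtriangles obtained by joining the midpoints of the edges of a triangle cover the triangle.) -/
variable {E : Type*} [NormedAddCommGroup E] [NormedSpace ℝ E]

lemma tri_mem (a b c : E) {α β γ : ℝ} (hα : 0 ≤ α) (hβ : 0 ≤ β) (hγ : 0 ≤ γ)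
    (hs : α + β + γ = 1) :
    α • a + β • b + γ • c ∈ convexHull ℝ ({a, b, c} : Set E) := by
  have := Finset.centerMass_mem_convexHull (Finset.univ : Finset (Fin 3))
    (w := ![α, β, γ]) (z := ![a, b, c]) (s := ({a, b, c} : Set E))
    (by intro i _; fin_cases i <;> assumption)
    (by simp [Fin.sum_univ_three, hs])
    (by intro i _; fin_cases i
        · show a ∈ _; simp
        · show b ∈ _; simp
        · show c ∈ _; simp)
  simpa [Finset.centerMass, Fin.sum_univ_three, hs, add_assoc] using this

lemma tri_rep {a b c x : E} (hx : x ∈ convexHull ℝ ({a, b, c} : Set E)) :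
    ∃ α β γ : ℝ, 0 ≤ α ∧ 0 ≤ β ∧ 0 ≤ γ ∧ α + β + γ = 1 ∧
      x = α • a + β • b + γ • c := by
  rw [show ({a, b, c} : Set E) = insert a {b, c} from rfl,
    convexHull_insert ⟨b, by simp⟩] at hx
  obtain ⟨z, hz, hseg⟩ := Set.mem_iUnion₂.mp hx
  rw [Set.mem_singleton_iff] at hz
  subst hz
  obtain ⟨y, hy, hseg⟩ := Set.mem_iUnion₂.mp hseg
  rw [convexHull_pair] at hy
  obtain ⟨u, v, hu, hv, huv, rfl⟩ := hy
  obtain ⟨t, s, ht, hs, hts, rfl⟩ := hseg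
  exact ⟨t, s * u, s * v, ht, mul_nonneg hs hu, mul_nonneg hs hv,
    by nlinarith, by module⟩

/-- Covering property of the red refinement: the four subtriangles obtained by
joining the midpoints of the edges of a triangle cover the triangle. -/
theorem red_refinement_cover
    (a b c : EuclideanSpace ℝ (Fin 2))
    (h : AffineIndependent ℝ ![a, b, c]) :
    convexHull ℝ {a, midpoint ℝ a b, midpoint ℝ a c} ∪
      convexHull ℝ {midpoint ℝ a b, b, midpoint ℝ b c} ∪
      convexHull ℝ {midpoint ℝ a c, midpoint ℝ b c, c} ∪
      convexHull ℝ {midpoint ℝ a b, midpoint ℝ b c, midpoint ℝ a c} =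
    convexHull ℝ {a, b, c} := by
  have hm : ∀ x y : EuclideanSpace ℝ (Fin 2),
      midpoint ℝ x y = (2⁻¹ : ℝ) • x + (2⁻¹ : ℝ) • y := by
    intro x y; rw [midpoint_eq_smul_add, invOf_eq_inv, smul_add]
  apply Set.Subset.antisymm
  · have key : ∀ s : Set (EuclideanSpace ℝ (Fin 2)),
        s ⊆ convexHull ℝ ({a, b, c} : Set _) →
        convexHull ℝ s ⊆ convexHull ℝ ({a, b, c} : Set _) := fun s hs =>
      convexHull_min hs (convex_convexHull ℝ _)
    have ha : a ∈ convexHull ℝ ({a, b, c} : Set _) := subset_convexHull ℝ _ (by simp)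
    have hb : b ∈ convexHull ℝ ({a, b, c} : Set _) := subset_convexHull ℝ _ (by simp)
    have hc : c ∈ convexHull ℝ ({a, b, c} : Set _) := subset_convexHull ℝ _ (by simp)
    have hab : midpoint ℝ a b ∈ convexHull ℝ ({a, b, c} : Set _) := by
      have h0 := tri_mem a b c (α := 2⁻¹) (β := 2⁻¹) (γ := 0) (by norm_num) (by norm_num)
        le_rfl (by norm_num)
      have : midpoint ℝ a b = (2⁻¹:ℝ) • a + (2⁻¹:ℝ) • b + (0:ℝ) • c := by
        rw [hm]; module
      rw [this]; exact h0
    have hac : midpoint ℝ a c ∈ convexHull ℝ ({a, b, c} : Set _) := by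
      have h0 := tri_mem a b c (α := 2⁻¹) (β := 0) (γ := 2⁻¹) (by norm_num) le_rfl
        (by norm_num) (by norm_num)
      have : midpoint ℝ a c = (2⁻¹:ℝ) • a + (0:ℝ) • b + (2⁻¹:ℝ) • c := by
        rw [hm]; module
      rw [this]; exact h0
    have hbc : midpoint ℝ b c ∈ convexHull ℝ ({a, b, c} : Set _) := by
      have h0 := tri_mem a b c (α := 0) (β := 2⁻¹) (γ := 2⁻¹) le_rfl (by norm_num)
        (by norm_num) (by norm_num)
      have : midpoint ℝ b c = (0:ℝ) • a + (2⁻¹:ℝ) • b + (2⁻¹:ℝ) • c := by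
        rw [hm]; module
      rw [this]; exact h0
    refine Set.union_subset (Set.union_subset (Set.union_subset ?_ ?_) ?_) ?_ <;>
      apply key <;> intro x hx <;>
      simp only [Set.mem_insert_iff, Set.mem_singleton_iff] at hx <;>
      rcases hx with rfl | rfl | rfl <;> assumption
  · intro x hx
    obtain ⟨α, β, γ, hα, hβ, hγ, hs, rfl⟩ := tri_rep hx
    by_cases h1 : 2⁻¹ ≤ α
    · refine Or.inl (Or.inl (Or.inl ?_))
      have heq : α • a + β • b + γ • c =
          (2*α - 1) • a + (2*β) • midpoint ℝ a b + (2*γ) • midpoint ℝ a c := by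
        rw [hm, hm]
        match_scalars <;> linarith
      rw [heq]
      exact tri_mem _ _ _ (by linarith) (by linarith) (by linarith) (by linarith)
    by_cases h2 : 2⁻¹ ≤ β
    · refine Or.inl (Or.inl (Or.inr ?_))
      have heq : α • a + β • b + γ • c =
          (2*α) • midpoint ℝ a b + (2*β - 1) • b + (2*γ) • midpoint ℝ b c := by
        rw [hm, hm]
        match_scalars <;> linarith
      rw [heq]
      exact tri_mem _ _ _ (by linarith) (by linarith) (by linarith) (by linarith)
    by_cases h3 : 2⁻¹ ≤ γ
    · refine Or.inl (Or.inr ?_)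
      have heq : α • a + β • b + γ • c =
          (2*α) • midpoint ℝ a c + (2*β) • midpoint ℝ b c + (2*γ - 1) • c := by
        rw [hm, hm]
        match_scalars <;> linarith
      rw [heq]
      exact tri_mem _ _ _ (by linarith) (by linarith) (by linarith) (by linarith)
    · refine Or.inr ?_
      have heq : α • a + β • b + γ • c =
          (1 - 2*γ) • midpoint ℝ a b + (1 - 2*α) • midpoint ℝ b c +
            (1 - 2*β) • midpoint ℝ a c := by
        rw [hm, hm, hm]
        match_scalars <;> linarith
      rw [heq]
      exact tri_mem _ _ _ (by linarith) (by linarith) (by linarith) (by linarith)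
end

section
/- Let a, b, c be affinely independent points in the Euclidean plane and let m_ab, m_bc, m_ac denote the midpoints of the segments ab, bc, ac. Then the topological interiors of the convex hulls of {a, m_ab, m_ac}, {m_ab, b, m_bc}, {m_ac, m_bc, c}, and {m_ab, m_bc, m_ac} are pairwise disjoint. (The four subtriangles of a red refinement have pairwise disjoint interiors.) -/
open Set

local notation "E" => EuclideanSpace ℝ (Fin 2)

private lemma rr_interior_lt {L : E →ᵃ[ℝ] ℝ} (hL : L.linear ≠ 0) {s : Set E} {r : ℝ} {x : E}
    (hs : ∀ y ∈ s, L y ≤ r) (hx : x ∈ interior s) : L x < r := by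
  obtain ⟨v, hv⟩ : ∃ v, L.linear v ≠ 0 := by
    by_contra hc
    push_neg at hc
    exact hL (LinearMap.ext hc)
  -- wlog L.linear v > 0
  obtain ⟨w, hw⟩ : ∃ w, 0 < L.linear w := by
    rcases lt_or_gt_of_ne hv with h0 | h0
    · exact ⟨-v, by simpa using h0⟩
    · exact ⟨v, h0⟩
  obtain ⟨ε, hε, hball⟩ := Metric.isOpen_iff.1 isOpen_interior x hx
  have hw0 : w ≠ 0 := by rintro rfl; simp at hw
  have hnw : 0 < ‖w‖ := norm_pos_iff.2 hw0
  set t : ℝ := ε / (2 * ‖w‖) with ht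
  have htpos : 0 < t := div_pos hε (by positivity)
  have hmem : t • w + x ∈ s := by
    apply interior_subset
    apply hball
    rw [Metric.mem_ball, dist_eq_norm]
    have : ‖t • w + x - x‖ = t * ‖w‖ := by
      simp [norm_smul, abs_of_pos htpos]
    rw [this, ht]
    rw [div_mul_eq_mul_div, mul_comm]
    rw [div_lt_iff₀ (by positivity)]
    nlinarith [norm_pos_iff.2 hw0, hε]
  have hL2 : L (t • w + x) = t * L.linear w + L x := by
    have := L.map_vadd x (t • w)
    simpa [vadd_eq_add] using this
  have := hs _ hmem
  rw [hL2] at this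
  nlinarith

private lemma rr_disjoint {L : E →ᵃ[ℝ] ℝ} (hL : L.linear ≠ 0) {s t : Set E} {r : ℝ}
    (hs : ∀ y ∈ s, L y ≤ r) (ht : ∀ y ∈ t, r ≤ L y) :
    Disjoint (interior (convexHull ℝ s)) (interior (convexHull ℝ t)) := by
  rw [Set.disjoint_left]
  intro x hx1 hx2
  have hs' : ∀ y ∈ convexHull ℝ s, L y ≤ r := by
    intro y hy
    have : convexHull ℝ s ⊆ {z | L z ≤ r} :=
      convexHull_min hs ((convex_Iic r).affine_preimage L)
    exact this hy
  have ht' : ∀ y ∈ convexHull ℝ t, (-L) y ≤ -r := by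
    intro y hy
    have : convexHull ℝ t ⊆ {z | r ≤ L z} :=
      convexHull_min ht ((convex_Ici r).affine_preimage L)
    have h3 : r ≤ L y := this hy
    simp only [AffineMap.coe_neg, Pi.neg_apply]
    linarith
  have h1 := rr_interior_lt hL hs' hx1
  have hL' : (-L).linear ≠ 0 := by
    simp only [AffineMap.neg_linear]   -- maybe wrong name
    simpa using hL
  have h2 := rr_interior_lt hL' ht' hx2
  simp only [AffineMap.coe_neg, Pi.neg_apply] at h2
  linarith

example : True := trivial

private lemma rr_mem3 {P : E → Prop} {p q r : E} (hp : P p) (hq : P q) (hr : P r) :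
    ∀ y ∈ ({p, q, r} : Set E), P y := by
  rintro y (rfl | rfl | rfl) <;> assumption

private lemma rr_midpoint_real (x y : ℝ) : midpoint ℝ x y = (x + y) / 2 := by
  rw [midpoint_eq_smul_add]
  simp [smul_eq_mul]
  ring

/-- The four subtriangles of a red refinement have pairwise disjoint
topological interiors. -/
theorem red_refinement_disjoint_interiors
    (a b c : EuclideanSpace ℝ (Fin 2))
    (h : AffineIndependent ℝ ![a, b, c]) :
    Disjoint (interior (convexHull ℝ {a, midpoint ℝ a b, midpoint ℝ a c}))
      (interior (convexHull ℝ {midpoint ℝ a b, b, midpoint ℝ b c})) ∧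
    Disjoint (interior (convexHull ℝ {a, midpoint ℝ a b, midpoint ℝ a c}))
      (interior (convexHull ℝ {midpoint ℝ a c, midpoint ℝ b c, c})) ∧
    Disjoint (interior (convexHull ℝ {a, midpoint ℝ a b, midpoint ℝ a c}))
      (interior (convexHull ℝ {midpoint ℝ a b, midpoint ℝ b c, midpoint ℝ a c})) ∧
    Disjoint (interior (convexHull ℝ {midpoint ℝ a b, b, midpoint ℝ b c}))
      (interior (convexHull ℝ {midpoint ℝ a c, midpoint ℝ b c, c})) ∧
    Disjoint (interior (convexHull ℝ {midpoint ℝ a b, b, midpoint ℝ b c}))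
      (interior (convexHull ℝ {midpoint ℝ a b, midpoint ℝ b c, midpoint ℝ a c})) ∧
    Disjoint (interior (convexHull ℝ {midpoint ℝ a c, midpoint ℝ b c, c}))
      (interior (convexHull ℝ {midpoint ℝ a b, midpoint ℝ b c, midpoint ℝ a c})) := by
  have htop : affineSpan ℝ (Set.range ![a, b, c]) = ⊤ :=
    h.affineSpan_eq_top_iff_card_eq_finrank_add_one.mpr (by simp [finrank_euclideanSpace])
  let B : AffineBasis (Fin 3) ℝ E := ⟨![a, b, c], h, htop⟩
  have ha : ∀ i, B.coord i a = if i = 0 then 1 else 0 := fun i => B.coord_apply i 0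
  have hb : ∀ i, B.coord i b = if i = 1 then 1 else 0 := fun i => B.coord_apply i 1
  have hc : ∀ i, B.coord i c = if i = 2 then 1 else 0 := fun i => B.coord_apply i 2
  have hmid : ∀ (p q : E) (i : Fin 3),
      B.coord i (midpoint ℝ p q) = (B.coord i p + B.coord i q) / 2 := by
    intro p q i
    rw [AffineMap.map_midpoint, rr_midpoint_real]
  have hlin : ∀ i : Fin 3, (B.coord i).linear ≠ 0 := by
    intro i hlc
    have hne : ∀ i : Fin 3, i ≠ i + 1 := by decide
    have h1 : B.coord i (B i) = 1 := B.coord_apply_eq i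
    have h2 : B.coord i (B (i + 1)) = 0 := B.coord_apply_ne (hne i)
    have h3 : B.coord i (B i) = (B.coord i).linear (B i -ᵥ B (i + 1)) +ᵥ B.coord i (B (i + 1)) := by
      rw [← AffineMap.map_vadd]
      congr 1
      exact (vsub_vadd _ _).symm
    rw [hlc, h1, h2] at h3
    simp at h3
  have hlinneg : ∀ i : Fin 3, (-(B.coord i)).linear ≠ 0 := fun i => by
    simpa [AffineMap.neg_linear] using hlin i
  refine ⟨rr_disjoint (hlin 1) (r := 1/2) ?_ ?_, rr_disjoint (hlin 2) (r := 1/2) ?_ ?_,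
      rr_disjoint (hlinneg 0) (r := -(1/2)) ?_ ?_,
      rr_disjoint (hlin 2) (r := 1/2) ?_ ?_,
      rr_disjoint (hlinneg 1) (r := -(1/2)) ?_ ?_,
      rr_disjoint (hlinneg 2) (r := -(1/2)) ?_ ?_⟩
  all_goals refine rr_mem3 ?_ ?_ ?_ <;>
    simp [ha, hb, hc, hmid, rr_midpoint_real, AffineMap.coe_neg, Pi.neg_apply] <;> norm_num
end

section
/- Let a, b, c be affinely independent points in the Euclidean plane and let m_ab, m_bc, m_ac denote the midpoints of the segments ab, bc, ac. Then each corner triangle of the red refinement meets the middle triangle in exactly their common edge, e.g. convexHull{a, m_ab, m_ac} ∩ convexHull{m_ab, m_bc, m_ac} = convexHull{m_ab, m_ac}, and any two distinct corner triangles meet in exactly their single common vertex, e.g. convexHull{a, m_ab, m_ac} ∩ convexHull{m_ab, b, m_bc} = {m_ab}. (The red refinement is conforming: any two of its subtriangles intersect in a common edge or a common vertex.) -/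
private lemma redref_mem_hull3 {E : Type*} [AddCommGroup E] [Module ℝ E] {v0 v1 v2 p : E} :
    p ∈ convexHull ℝ ({v0, v1, v2} : Set E) ↔
      ∃ x y z : ℝ, 0 ≤ x ∧ 0 ≤ y ∧ 0 ≤ z ∧ x + y + z = 1 ∧ x • v0 + y • v1 + z • v2 = p := by
  constructor
  · intro hp
    have key : convexHull ℝ ({v0, v1, v2} : Set E) ⊆
        {q : E | ∃ x y z : ℝ, 0 ≤ x ∧ 0 ≤ y ∧ 0 ≤ z ∧ x + y + z = 1 ∧
          x • v0 + y • v1 + z • v2 = q} := by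
      refine convexHull_min ?_ ?_
      · rintro q (rfl | rfl | rfl)
        · exact ⟨1, 0, 0, by norm_num, by norm_num, by norm_num, by norm_num, by module⟩
        · exact ⟨0, 1, 0, by norm_num, by norm_num, by norm_num, by norm_num, by module⟩
        · exact ⟨0, 0, 1, by norm_num, by norm_num, by norm_num, by norm_num, by module⟩
      · rintro q ⟨x1, y1, z1, hx1, hy1, hz1, hs1, rfl⟩ r ⟨x2, y2, z2, hx2, hy2, hz2, hs2, rfl⟩
          α β hα hβ hαβ
        refine ⟨α * x1 + β * x2, α * y1 + β * y2, α * z1 + β * z2, by positivity, by positivity,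
          by positivity, by nlinarith, by module⟩
    exact key hp
  · rintro ⟨x, y, z, hx, hy, hz, hsum, rfl⟩
    have hsum1 : ∑ i, ![x, y, z] i = 1 := by simp [Fin.sum_univ_three]; linarith
    have hmem : Finset.univ.centerMass ![x, y, z] ![v0, v1, v2] ∈
        convexHull ℝ ({v0, v1, v2} : Set E) := by
      apply Finset.centerMass_mem_convexHull
      · intro i _; fin_cases i <;> simpa
      · rw [hsum1]; norm_num
      · intro i _; fin_cases i <;> simp
    rw [Finset.centerMass_eq_of_sum_1 _ _ hsum1, Fin.sum_univ_three] at hmem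
    simpa using hmem

private lemma redref_uniq {E : Type*} [AddCommGroup E] [Module ℝ E] {a b c : E}
    (h : AffineIndependent ℝ ![a, b, c]) {x y z x' y' z' : ℝ}
    (hs : x + y + z = 1) (hs' : x' + y' + z' = 1)
    (he : x • a + y • b + z • c = x' • a + y' • b + z' • c) :
    x = x' ∧ y = y' ∧ z = z' := by
  have key := (affineIndependent_iff_eq_of_fintype_affineCombination_eq ℝ ![a, b, c]).1 h
    ![x, y, z] ![x', y', z'] (by simp [Fin.sum_univ_three]; linarith)
    (by simp [Fin.sum_univ_three]; linarith) ?_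
  · exact ⟨congrFun key 0, congrFun key 1, congrFun key 2⟩
  · rw [Finset.affineCombination_eq_linear_combination _ _ _ (by simp [Fin.sum_univ_three]; linarith),
      Finset.affineCombination_eq_linear_combination _ _ _ (by simp [Fin.sum_univ_three]; linarith)]
    simpa [Fin.sum_univ_three] using he

set_option maxHeartbeats 1000000 in
/-- The red refinement is conforming: each corner triangle meets the middle
triangle in exactly their common edge, and any two distinct corner triangles
meet in exactly their single common vertex. -/
theorem red_refinement_conforming
    (a b c : EuclideanSpace ℝ (Fin 2))
    (h : AffineIndependent ℝ ![a, b, c]) :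
    convexHull ℝ {a, midpoint ℝ a b, midpoint ℝ a c} ∩
        convexHull ℝ {midpoint ℝ a b, midpoint ℝ b c, midpoint ℝ a c} =
      convexHull ℝ {midpoint ℝ a b, midpoint ℝ a c} ∧
    convexHull ℝ {midpoint ℝ a b, b, midpoint ℝ b c} ∩
        convexHull ℝ {midpoint ℝ a b, midpoint ℝ b c, midpoint ℝ a c} =
      convexHull ℝ {midpoint ℝ a b, midpoint ℝ b c} ∧
    convexHull ℝ {midpoint ℝ a c, midpoint ℝ b c, c} ∩
        convexHull ℝ {midpoint ℝ a b, midpoint ℝ b c, midpoint ℝ a c} =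
      convexHull ℝ {midpoint ℝ a c, midpoint ℝ b c} ∧
    convexHull ℝ {a, midpoint ℝ a b, midpoint ℝ a c} ∩
        convexHull ℝ {midpoint ℝ a b, b, midpoint ℝ b c} =
      {midpoint ℝ a b} ∧
    convexHull ℝ {a, midpoint ℝ a b, midpoint ℝ a c} ∩
        convexHull ℝ {midpoint ℝ a c, midpoint ℝ b c, c} =
      {midpoint ℝ a c} ∧
    convexHull ℝ {midpoint ℝ a b, b, midpoint ℝ b c} ∩
        convexHull ℝ {midpoint ℝ a c, midpoint ℝ b c, c} =
      {midpoint ℝ b c} := by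
  have hmab : midpoint ℝ a b = (1/2 : ℝ) • a + (1/2 : ℝ) • b := by
    rw [midpoint_eq_smul_add, invOf_eq_inv]; module
  have hmbc : midpoint ℝ b c = (1/2 : ℝ) • b + (1/2 : ℝ) • c := by
    rw [midpoint_eq_smul_add, invOf_eq_inv]; module
  have hmac : midpoint ℝ a c = (1/2 : ℝ) • a + (1/2 : ℝ) • c := by
    rw [midpoint_eq_smul_add, invOf_eq_inv]; module
  have memA : ∀ p, p ∈ convexHull ℝ ({a, midpoint ℝ a b, midpoint ℝ a c} :
      Set (EuclideanSpace ℝ (Fin 2))) ↔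
      ∃ x y z : ℝ, 1/2 ≤ x ∧ 0 ≤ y ∧ 0 ≤ z ∧ x + y + z = 1 ∧ x • a + y • b + z • c = p := by
    intro p
    rw [redref_mem_hull3]
    constructor
    · rintro ⟨s, t, u, hs, ht, hu, hsum, rfl⟩
      refine ⟨s + t/2 + u/2, t/2, u/2, by linarith, by linarith, by linarith, by linarith, ?_⟩
      rw [hmab, hmac]; module
    · rintro ⟨x, y, z, hx, hy, hz, hsum, rfl⟩
      have hz' : z = 1 - x - y := by linarith
      subst hz'
      refine ⟨2*x - 1, 2*y, 2*(1 - x - y), by linarith, by linarith, by linarith, by linarith, ?_⟩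
      rw [hmab, hmac]; module
  have memB : ∀ p, p ∈ convexHull ℝ ({midpoint ℝ a b, b, midpoint ℝ b c} :
      Set (EuclideanSpace ℝ (Fin 2))) ↔
      ∃ x y z : ℝ, 0 ≤ x ∧ 1/2 ≤ y ∧ 0 ≤ z ∧ x + y + z = 1 ∧ x • a + y • b + z • c = p := by
    intro p
    rw [redref_mem_hull3]
    constructor
    · rintro ⟨s, t, u, hs, ht, hu, hsum, rfl⟩
      refine ⟨s/2, s/2 + t + u/2, u/2, by linarith, by linarith, by linarith, by linarith, ?_⟩
      rw [hmab, hmbc]; module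
    · rintro ⟨x, y, z, hx, hy, hz, hsum, rfl⟩
      have hz' : z = 1 - x - y := by linarith
      subst hz'
      refine ⟨2*x, 2*y - 1, 2*(1 - x - y), by linarith, by linarith, by linarith, by linarith, ?_⟩
      rw [hmab, hmbc]; module
  have memC : ∀ p, p ∈ convexHull ℝ ({midpoint ℝ a c, midpoint ℝ b c, c} :
      Set (EuclideanSpace ℝ (Fin 2))) ↔
      ∃ x y z : ℝ, 0 ≤ x ∧ 0 ≤ y ∧ 1/2 ≤ z ∧ x + y + z = 1 ∧ x • a + y • b + z • c = p := by
    intro p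
    rw [redref_mem_hull3]
    constructor
    · rintro ⟨s, t, u, hs, ht, hu, hsum, rfl⟩
      refine ⟨s/2, t/2, s/2 + t/2 + u, by linarith, by linarith, by linarith, by linarith, ?_⟩
      rw [hmac, hmbc]; module
    · rintro ⟨x, y, z, hx, hy, hz, hsum, rfl⟩
      have hz' : z = 1 - x - y := by linarith
      subst hz'
      refine ⟨2*x, 2*y, 1 - 2*x - 2*y, by linarith, by linarith, by linarith, by linarith, ?_⟩
      rw [hmac, hmbc]; module
  have memM : ∀ p, p ∈ convexHull ℝ ({midpoint ℝ a b, midpoint ℝ b c, midpoint ℝ a c} :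
      Set (EuclideanSpace ℝ (Fin 2))) ↔
      ∃ x y z : ℝ, x ≤ 1/2 ∧ y ≤ 1/2 ∧ z ≤ 1/2 ∧ x + y + z = 1 ∧ x • a + y • b + z • c = p := by
    intro p
    rw [redref_mem_hull3]
    constructor
    · rintro ⟨s, t, u, hs, ht, hu, hsum, rfl⟩
      refine ⟨(s+u)/2, (s+t)/2, (t+u)/2, by linarith, by linarith, by linarith, by linarith, ?_⟩
      rw [hmab, hmbc, hmac]; module
    · rintro ⟨x, y, z, hx, hy, hz, hsum, rfl⟩
      have hz' : z = 1 - x - y := by linarith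
      subst hz'
      refine ⟨2*x + 2*y - 1, 1 - 2*x, 1 - 2*y, by linarith, by linarith, by linarith,
        by linarith, ?_⟩
      rw [hmab, hmbc, hmac]; module
  have memE : ∀ v w (p : EuclideanSpace ℝ (Fin 2)), p ∈ convexHull ℝ ({v, w} :
      Set (EuclideanSpace ℝ (Fin 2))) ↔
      ∃ t u : ℝ, 0 ≤ t ∧ 0 ≤ u ∧ t + u = 1 ∧ t • v + u • w = p := by
    intro v w p
    rw [convexHull_pair]
    exact Iff.rfl
  refine ⟨?_, ?_, ?_, ?_, ?_, ?_⟩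
  · ext p
    simp only [Set.mem_inter_iff]
    rw [memA, memM, memE]
    constructor
    · rintro ⟨⟨x, y, z, hx, hy, hz, hs, he⟩, ⟨x', y', z', hx', hy', hz', hs', he'⟩⟩
      obtain ⟨e1, e2, e3⟩ := redref_uniq h hs hs' (he.trans he'.symm)
      subst e1; subst e2; subst e3
      have h1 : x = 1/2 := le_antisymm hx' hx
      subst h1
      have h2 : z = 1/2 - y := by linarith
      subst h2
      refine ⟨2*y, 1 - 2*y, by linarith, by linarith, by linarith, ?_⟩
      rw [hmab, hmac, ← he]; module
    · rintro ⟨t, u, ht, hu, hs, rfl⟩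
      have hu' : u = 1 - t := by linarith
      subst hu'
      constructor
      · refine ⟨1/2, t/2, (1-t)/2, by norm_num, by linarith, by linarith, by linarith, ?_⟩
        rw [hmab, hmac]; module
      · refine ⟨1/2, t/2, (1-t)/2, by norm_num, by linarith, by linarith, by linarith, ?_⟩
        rw [hmab, hmac]; module
  · ext p
    simp only [Set.mem_inter_iff]
    rw [memB, memM, memE]
    constructor
    · rintro ⟨⟨x, y, z, hx, hy, hz, hs, he⟩, ⟨x', y', z', hx', hy', hz', hs', he'⟩⟩
      obtain ⟨e1, e2, e3⟩ := redref_uniq h hs hs' (he.trans he'.symm)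
      subst e1; subst e2; subst e3
      have h1 : y = 1/2 := le_antisymm hy' hy
      subst h1
      have h2 : z = 1/2 - x := by linarith
      subst h2
      refine ⟨2*x, 1 - 2*x, by linarith, by linarith, by linarith, ?_⟩
      rw [hmab, hmbc, ← he]; module
    · rintro ⟨t, u, ht, hu, hs, rfl⟩
      have hu' : u = 1 - t := by linarith
      subst hu'
      constructor
      · refine ⟨t/2, 1/2, (1-t)/2, by linarith, by norm_num, by linarith, by linarith, ?_⟩
        rw [hmab, hmbc]; module
      · refine ⟨t/2, 1/2, (1-t)/2, by linarith, by norm_num, by linarith, by linarith, ?_⟩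
        rw [hmab, hmbc]; module
  · ext p
    simp only [Set.mem_inter_iff]
    rw [memC, memM, memE]
    constructor
    · rintro ⟨⟨x, y, z, hx, hy, hz, hs, he⟩, ⟨x', y', z', hx', hy', hz', hs', he'⟩⟩
      obtain ⟨e1, e2, e3⟩ := redref_uniq h hs hs' (he.trans he'.symm)
      subst e1; subst e2; subst e3
      have h1 : z = 1/2 := le_antisymm hz' hz
      subst h1
      have h2 : y = 1/2 - x := by linarith
      subst h2
      refine ⟨2*x, 1 - 2*x, by linarith, by linarith, by linarith, ?_⟩
      rw [hmac, hmbc, ← he]; module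
    · rintro ⟨t, u, ht, hu, hs, rfl⟩
      have hu' : u = 1 - t := by linarith
      subst hu'
      constructor
      · refine ⟨t/2, (1-t)/2, 1/2, by linarith, by linarith, by norm_num, by linarith, ?_⟩
        rw [hmac, hmbc]; module
      · refine ⟨t/2, (1-t)/2, 1/2, by linarith, by linarith, by norm_num, by linarith, ?_⟩
        rw [hmac, hmbc]; module
  · ext p
    simp only [Set.mem_inter_iff, Set.mem_singleton_iff]
    rw [memA, memB]
    constructor
    · rintro ⟨⟨x, y, z, hx, hy, hz, hs, he⟩, ⟨x', y', z', hx', hy', hz', hs', he'⟩⟩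
      obtain ⟨e1, e2, e3⟩ := redref_uniq h hs hs' (he.trans he'.symm)
      subst e1; subst e2; subst e3
      have h1 : x = 1/2 := by linarith
      have h2 : y = 1/2 := by linarith
      have h3 : z = 0 := by linarith
      subst h1; subst h2; subst h3
      rw [← he, hmab]; module
    · rintro rfl
      exact ⟨⟨1/2, 1/2, 0, by norm_num, by norm_num, by norm_num, by norm_num,
          by rw [hmab]; module⟩,
        ⟨1/2, 1/2, 0, by norm_num, by norm_num, by norm_num, by norm_num,
          by rw [hmab]; module⟩⟩
  · ext p
    simp only [Set.mem_inter_iff, Set.mem_singleton_iff]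
    rw [memA, memC]
    constructor
    · rintro ⟨⟨x, y, z, hx, hy, hz, hs, he⟩, ⟨x', y', z', hx', hy', hz', hs', he'⟩⟩
      obtain ⟨e1, e2, e3⟩ := redref_uniq h hs hs' (he.trans he'.symm)
      subst e1; subst e2; subst e3
      have h1 : x = 1/2 := by linarith
      have h2 : z = 1/2 := by linarith
      have h3 : y = 0 := by linarith
      subst h1; subst h2; subst h3
      rw [← he, hmac]; module
    · rintro rfl
      exact ⟨⟨1/2, 0, 1/2, by norm_num, by norm_num, by norm_num, by norm_num,
          by rw [hmac]; module⟩,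
        ⟨1/2, 0, 1/2, by norm_num, by norm_num, by norm_num, by norm_num,
          by rw [hmac]; module⟩⟩
  · ext p
    simp only [Set.mem_inter_iff, Set.mem_singleton_iff]
    rw [memB, memC]
    constructor
    · rintro ⟨⟨x, y, z, hx, hy, hz, hs, he⟩, ⟨x', y', z', hx', hy', hz', hs', he'⟩⟩
      obtain ⟨e1, e2, e3⟩ := redref_uniq h hs hs' (he.trans he'.symm)
      subst e1; subst e2; subst e3
      have h1 : y = 1/2 := by linarith
      have h2 : z = 1/2 := by linarith
      have h3 : x = 0 := by linarith
      subst h1; subst h2; subst h3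
      rw [← he, hmbc]; module
    · rintro rfl
      exact ⟨⟨0, 1/2, 1/2, by norm_num, by norm_num, by norm_num, by norm_num,
          by rw [hmbc]; module⟩,
        ⟨0, 1/2, 1/2, by norm_num, by norm_num, by norm_num, by norm_num,
          by rw [hmbc]; module⟩⟩
end

section
/- Let a, b, c be affinely independent points in the Euclidean plane and let m denote the midpoint of the segment ab. Then the union of the convex hulls of {a, m, c} and {m, b, c} equals the convex hull of {a, b, c}. (Covering property of the green refinement: bisecting a triangle by joining the midpoint of one edge to the opposite vertex yields two subtriangles covering the triangle.) -/
open Set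

lemma midpoint_smul_rep {E : Type*} [AddCommGroup E] [Module ℝ E] (a b : E) :
    midpoint ℝ a b = (1/2 : ℝ) • a + (1/2 : ℝ) • b := by
  rw [midpoint_eq_smul_add, invOf_eq_inv, smul_add]
  norm_num

lemma segment_split {E : Type*} [AddCommGroup E] [Module ℝ E] (a b : E) :
    segment ℝ a (midpoint ℝ a b) ∪ segment ℝ (midpoint ℝ a b) b = segment ℝ a b := by
  apply Subset.antisymm
  · apply union_subset
    · exact (convex_segment a b).segment_subset (left_mem_segment ℝ a b)
        (midpoint_mem_segment a b)
    · exact (convex_segment a b).segment_subset (midpoint_mem_segment a b)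
        (right_mem_segment ℝ a b)
  · rintro x ⟨u, v, hu, hv, huv, rfl⟩
    rcases le_or_gt v (1/2) with hle | hlt
    · left
      refine ⟨u - v, 2 * v, by linarith, by linarith, by linarith, ?_⟩
      rw [midpoint_smul_rep]
      module
    · right
      refine ⟨2 * u, v - u, by linarith, by linarith, by linarith, ?_⟩
      rw [midpoint_smul_rep]
      module

/-- Covering property of the green refinement: bisecting a triangle by joining
the midpoint of one edge to the opposite vertex yields two subtriangles
covering the triangle. -/
theorem green_refinement_cover
    (a b c : EuclideanSpace ℝ (Fin 2))
    (h : AffineIndependent ℝ ![a, b, c]) :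
    convexHull ℝ {a, midpoint ℝ a b, c} ∪ convexHull ℝ {midpoint ℝ a b, b, c} =
      convexHull ℝ {a, b, c} := by
  set m := midpoint ℝ a b with hm
  have h1 : ({a, m, c} : Set (EuclideanSpace ℝ (Fin 2))) = insert c {a, m} := by
    ext x; simp; tauto
  have h2 : ({m, b, c} : Set (EuclideanSpace ℝ (Fin 2))) = insert c {m, b} := by
    ext x; simp; tauto
  have h3 : ({a, b, c} : Set (EuclideanSpace ℝ (Fin 2))) = insert c {a, b} := by
    ext x; simp; tauto
  rw [h1, h2, h3, convexHull_insert (insert_nonempty _ _),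
    convexHull_insert (insert_nonempty _ _), convexHull_insert (insert_nonempty _ _),
    convexHull_pair, convexHull_pair, convexHull_pair, ← convexJoin_union_right,
    segment_split]
end

section
/- Let a, b, c be affinely independent points in the Euclidean plane and let m denote the midpoint of the segment ab. Then the two subtriangles of the green refinement intersect exactly in the bisecting segment, i.e. convexHull{a, m, c} ∩ convexHull{m, b, c} = convexHull{m, c}, and their topological interiors are disjoint. (The green refinement is conforming: the two children meet in a common edge.) -/
open Set

private lemma mem_hull3 {V : Type*} [AddCommGroup V] [Module ℝ V] {p q r x : V} :
    x ∈ convexHull ℝ ({p, q, r} : Set V) ↔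
      ∃ α β γ : ℝ, 0 ≤ α ∧ 0 ≤ β ∧ 0 ≤ γ ∧ α + β + γ = 1 ∧ α • p + β • q + γ • r = x := by
  constructor
  · intro hx
    rw [convexHull_insert ⟨q, by simp⟩, mem_convexJoin] at hx
    obtain ⟨y, hy, z, hz, hxz⟩ := hx
    rw [Set.mem_singleton_iff] at hy; subst hy
    rw [convexHull_pair] at hz
    obtain ⟨u, v, hu, hv, huv, rfl⟩ := hz
    obtain ⟨s, t, hs, ht, hst, rfl⟩ := hxz
    refine ⟨s, t * u, t * v, hs, by positivity, by positivity, by nlinarith, ?_⟩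
    simp only [smul_add, mul_smul]; abel
  · rintro ⟨α, β, γ, hα, hβ, hγ, hsum, rfl⟩
    refine mem_convexHull_of_exists_fintype ![α, β, γ] ![p, q, r]
      (fun i => by fin_cases i <;> simpa) (by simp [Fin.sum_univ_three, hsum])
      (fun i => by fin_cases i <;> simp) (by simp [Fin.sum_univ_three])

/-- The green refinement is conforming: the two children meet exactly in the
bisecting segment, and their topological interiors are disjoint. -/
theorem green_refinement_conforming
    (a b c : EuclideanSpace ℝ (Fin 2))
    (h : AffineIndependent ℝ ![a, b, c]) :
    convexHull ℝ {a, midpoint ℝ a b, c} ∩ convexHull ℝ {midpoint ℝ a b, b, c} =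
      convexHull ℝ {midpoint ℝ a b, c} ∧
    Disjoint (interior (convexHull ℝ {a, midpoint ℝ a b, c}))
      (interior (convexHull ℝ {midpoint ℝ a b, b, c})) := by
  set m := midpoint ℝ a b with hm_def
  have hm : m = (1/2 : ℝ) • a + (1/2 : ℝ) • b := by
    rw [hm_def, midpoint_eq_smul_add, invOf_eq_inv, smul_add, one_div]
  have key : convexHull ℝ {a, m, c} ∩ convexHull ℝ {m, b, c} = convexHull ℝ {m, c} := by
    apply Set.Subset.antisymm
    · rintro x ⟨hx1, hx2⟩
      obtain ⟨s₁, t₁, u₁, hs₁, ht₁, hu₁, hsum₁, hx₁⟩ := mem_hull3.mp hx1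
      obtain ⟨s₂, t₂, u₂, hs₂, ht₂, hu₂, hsum₂, hx₂⟩ := mem_hull3.mp hx2
      have heq : s₁ • a + t₁ • m + u₁ • c = s₂ • m + t₂ • b + u₂ • c := hx₁.trans hx₂.symm
      have hcomb : ∑ i, (![s₁ + t₁/2 - s₂/2, t₁/2 - s₂/2 - t₂, u₁ - u₂] : Fin 3 → ℝ) i
          • ![a, b, c] i = 0 := by
        have : (s₁ + t₁/2 - s₂/2) • a + (t₁/2 - s₂/2 - t₂) • b + (u₁ - u₂) • c =
            (s₁ • a + t₁ • m + u₁ • c) - (s₂ • m + t₂ • b + u₂ • c) := by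
          rw [hm]; module
        simp only [Fin.sum_univ_three, Matrix.cons_val_zero, Matrix.cons_val_one,
          Matrix.head_cons, Matrix.cons_val_two, Matrix.tail_cons]
        rw [this, heq, sub_self]
      have hwsum : ∑ i, (![s₁ + t₁/2 - s₂/2, t₁/2 - s₂/2 - t₂, u₁ - u₂] : Fin 3 → ℝ) i = 0 := by
        simp only [Fin.sum_univ_three, Matrix.cons_val_zero, Matrix.cons_val_one,
          Matrix.head_cons, Matrix.cons_val_two, Matrix.tail_cons]
        linarith
      have hz := affineIndependent_iff.mp h Finset.univ _ (by simpa using hwsum)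
        (by simpa using hcomb)
      have h0 : s₁ + t₁/2 - s₂/2 = 0 := by simpa using hz 0 (Finset.mem_univ _)
      have h1 : t₁/2 - s₂/2 - t₂ = 0 := by simpa using hz 1 (Finset.mem_univ _)
      have hs₁0 : s₁ = 0 := by linarith
      rw [convexHull_pair]
      exact ⟨t₁, u₁, ht₁, hu₁, by linarith, by rw [← hx₁, hs₁0]; simp⟩
    · refine Set.subset_inter (convexHull_mono ?_) (convexHull_mono ?_) <;>
        · intro y hy; simp only [Set.mem_insert_iff, Set.mem_singleton_iff] at hy ⊢; tauto
  refine ⟨key, ?_⟩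
  rw [Set.disjoint_iff_inter_eq_empty, ← interior_inter, key]
  by_contra hne
  rw [← Set.not_nonempty_iff_eq_empty, not_not] at hne
  rw [(convex_convexHull ℝ _).interior_nonempty_iff_affineSpan_eq_top,
    affineSpan_convexHull] at hne
  have hdir : vectorSpan ℝ ({m, c} : Set (EuclideanSpace ℝ (Fin 2))) = ⊤ := by
    rw [← direction_affineSpan, hne, AffineSubspace.direction_top]
  rw [vectorSpan_pair] at hdir
  have hfr : Module.finrank ℝ (ℝ ∙ (m -ᵥ c)) = 2 := by
    rw [hdir, finrank_top, finrank_euclideanSpace_fin]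
  by_cases hmc : m -ᵥ c = 0
  · rw [hmc, Submodule.span_zero_singleton] at hdir
    exact absurd hdir bot_ne_top
  · rw [finrank_span_singleton hmc] at hfr
    norm_num at hfr
end

section
/- Let a, b, c be affinely independent points in the Euclidean plane, let m denote the midpoint of the segment ab and n the midpoint of the segment bc. Then the three subtriangles of the blue refinement cover the triangle and have pairwise disjoint interiors: convexHull{a, m, c} ∪ convexHull{m, b, n} ∪ convexHull{n, c, m} = convexHull{a, b, c}, and the topological interiors of convexHull{a, m, c}, convexHull{m, b, n}, and convexHull{n, c, m} are pairwise disjoint. -/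
open Set Finset

private lemma forall_fin3 {P : Fin 3 → Prop} (h0 : P 0) (h1 : P 1) (h2 : P 2) : ∀ i, P i := by
  intro i; fin_cases i <;> assumption

private lemma affIndep_fin3_iff {V : Type*} [AddCommGroup V] [Module ℝ V] (p : Fin 3 → V) :
    AffineIndependent ℝ p ↔
      ∀ w0 w1 w2 : ℝ, w0 + w1 + w2 = 0 → w0 • p 0 + w1 • p 1 + w2 • p 2 = 0 →
        w0 = 0 ∧ w1 = 0 ∧ w2 = 0 := by
  rw [affineIndependent_iff_of_fintype]
  constructor
  · intro H w0 w1 w2 hs hc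
    have hs' : ∑ i, (![w0, w1, w2] : Fin 3 → ℝ) i = 0 := by
      simp [Fin.sum_univ_three]; linarith
    have hc' : Finset.univ.weightedVSub p ![w0, w1, w2] = (0 : V) := by
      rw [Finset.univ.weightedVSub_eq_linear_combination hs']
      simpa [Fin.sum_univ_three] using hc
    have := H ![w0, w1, w2] hs' hc'
    exact ⟨this 0, this 1, this 2⟩
  · intro H w hs hc
    rw [Finset.univ.weightedVSub_eq_linear_combination hs] at hc
    simp only [Fin.sum_univ_three] at hs hc
    have := H (w 0) (w 1) (w 2) hs hc
    exact forall_fin3 this.1 this.2.1 this.2.2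

set_option maxHeartbeats 2000000 in
/-- The three subtriangles of the blue refinement cover the triangle and have
pairwise disjoint topological interiors. -/
theorem blue_refinement_cover_disjoint
    (a b c : EuclideanSpace ℝ (Fin 2))
    (h : AffineIndependent ℝ ![a, b, c]) :
    convexHull ℝ {a, midpoint ℝ a b, c} ∪
        convexHull ℝ {midpoint ℝ a b, b, midpoint ℝ b c} ∪
        convexHull ℝ {midpoint ℝ b c, c, midpoint ℝ a b} =
      convexHull ℝ {a, b, c} ∧
    Disjoint (interior (convexHull ℝ {a, midpoint ℝ a b, c}))
      (interior (convexHull ℝ {midpoint ℝ a b, b, midpoint ℝ b c})) ∧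
    Disjoint (interior (convexHull ℝ {a, midpoint ℝ a b, c}))
      (interior (convexHull ℝ {midpoint ℝ b c, c, midpoint ℝ a b})) ∧
    Disjoint (interior (convexHull ℝ {midpoint ℝ a b, b, midpoint ℝ b c}))
      (interior (convexHull ℝ {midpoint ℝ b c, c, midpoint ℝ a b})) := by
  set m := midpoint ℝ a b with hm_def
  set n := midpoint ℝ b c with hn_def
  have hm : m = (2⁻¹ : ℝ) • a + (2⁻¹ : ℝ) • b := by
    rw [hm_def, midpoint_eq_smul_add, invOf_eq_inv, smul_add]
  have hn : n = (2⁻¹ : ℝ) • b + (2⁻¹ : ℝ) • c := by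
    rw [hn_def, midpoint_eq_smul_add, invOf_eq_inv, smul_add]
  -- basic independence facts
  have hABC := (affIndep_fin3_iff ![a, b, c]).1 h
  simp only [Matrix.cons_val_zero, Matrix.cons_val_one, Matrix.head_cons,
    Matrix.cons_val_two, Matrix.tail_cons] at hABC
  have hcard : Fintype.card (Fin 3) = Module.finrank ℝ (EuclideanSpace ℝ (Fin 2)) + 1 := by
    simp [finrank_euclideanSpace_fin]
  -- the four affine bases
  have h1 : AffineIndependent ℝ ![a, m, c] := by
    rw [affIndep_fin3_iff]
    intro w0 w1 w2 hs hc
    simp only [Matrix.cons_val_zero, Matrix.cons_val_one, Matrix.head_cons,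
      Matrix.cons_val_two, Matrix.tail_cons] at hc
    rw [hm] at hc
    have hc' : (w0 + 2⁻¹ * w1) • a + (2⁻¹ * w1) • b + w2 • c = 0 := by
      rw [← hc]; module
    obtain ⟨e0, e1, e2⟩ := hABC _ _ _ (by linarith) hc'
    refine ⟨by linarith, by linarith, e2⟩
  have h2 : AffineIndependent ℝ ![m, b, n] := by
    rw [affIndep_fin3_iff]
    intro w0 w1 w2 hs hc
    simp only [Matrix.cons_val_zero, Matrix.cons_val_one, Matrix.head_cons,
      Matrix.cons_val_two, Matrix.tail_cons] at hc
    rw [hm, hn] at hc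
    have hc' : (2⁻¹ * w0) • a + (2⁻¹ * w0 + w1 + 2⁻¹ * w2) • b + (2⁻¹ * w2) • c = 0 := by
      rw [← hc]; module
    obtain ⟨e0, e1, e2⟩ := hABC _ _ _ (by linarith) hc'
    refine ⟨by linarith, by linarith, by linarith⟩
  have h3 : AffineIndependent ℝ ![n, c, m] := by
    rw [affIndep_fin3_iff]
    intro w0 w1 w2 hs hc
    simp only [Matrix.cons_val_zero, Matrix.cons_val_one, Matrix.head_cons,
      Matrix.cons_val_two, Matrix.tail_cons] at hc
    rw [hm, hn] at hc
    have hc' : (2⁻¹ * w2) • a + (2⁻¹ * w0 + 2⁻¹ * w2) • b + (2⁻¹ * w0 + w1) • c = 0 := by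
      rw [← hc]; module
    obtain ⟨e0, e1, e2⟩ := hABC _ _ _ (by linarith) hc'
    refine ⟨by linarith, by linarith, by linarith⟩
  let B : AffineBasis (Fin 3) ℝ (EuclideanSpace ℝ (Fin 2)) :=
    ⟨![a, b, c], h, h.affineSpan_eq_top_iff_card_eq_finrank_add_one.mpr hcard⟩
  let B1 : AffineBasis (Fin 3) ℝ (EuclideanSpace ℝ (Fin 2)) :=
    ⟨![a, m, c], h1, h1.affineSpan_eq_top_iff_card_eq_finrank_add_one.mpr hcard⟩
  let B2 : AffineBasis (Fin 3) ℝ (EuclideanSpace ℝ (Fin 2)) :=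
    ⟨![m, b, n], h2, h2.affineSpan_eq_top_iff_card_eq_finrank_add_one.mpr hcard⟩
  let B3 : AffineBasis (Fin 3) ℝ (EuclideanSpace ℝ (Fin 2)) :=
    ⟨![n, c, m], h3, h3.affineSpan_eq_top_iff_card_eq_finrank_add_one.mpr hcard⟩
  set x : (EuclideanSpace ℝ (Fin 2)) → ℝ := fun p => B.coord 0 p with hx
  set y : (EuclideanSpace ℝ (Fin 2)) → ℝ := fun p => B.coord 1 p with hy
  set z : (EuclideanSpace ℝ (Fin 2)) → ℝ := fun p => B.coord 2 p with hz
  have hsum : ∀ p : (EuclideanSpace ℝ (Fin 2)), x p + y p + z p = 1 := by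
    intro p
    have := B.sum_coord_apply_eq_one p
    rw [Fin.sum_univ_three] at this
    exact this
  have hp : ∀ p : (EuclideanSpace ℝ (Fin 2)), x p • a + y p • b + z p • c = p := by
    intro p
    have := B.linear_combination_coord_eq_self p
    simp only [Fin.sum_univ_three] at this
    exact this
  -- coordinates of the three sub-bases
  have coord_eq : ∀ (C : AffineBasis (Fin 3) ℝ (EuclideanSpace ℝ (Fin 2))) (p : (EuclideanSpace ℝ (Fin 2))) (w : Fin 3 → ℝ),
      (∑ i, w i = 1) → (w 0 • C 0 + w 1 • C 1 + w 2 • C 2 = p) →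
      ∀ i, C.coord i p = w i := by
    intro C p w hw hcomb i
    have hc : Finset.univ.affineCombination ℝ (⇑C) w = p := by
      rw [Finset.univ.affineCombination_eq_linear_combination _ _ hw, Fin.sum_univ_three]
      exact hcomb
    rw [← hc, C.coord_apply_combination_of_mem (Finset.mem_univ i) hw]
  have c1 : ∀ (p : (EuclideanSpace ℝ (Fin 2))) (i : Fin 3),
      B1.coord i p = (![x p - y p, 2 * y p, z p] : Fin 3 → ℝ) i := by
    intro p
    refine coord_eq B1 p _ ?_ ?_
    · simp [Fin.sum_univ_three]; linarith [hsum p]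
    · show (x p - y p) • a + (2 * y p) • m + z p • c = p
      rw [hm]; conv_rhs => rw [← hp p]
      module
  have c2 : ∀ (p : (EuclideanSpace ℝ (Fin 2))) (i : Fin 3),
      B2.coord i p = (![2 * x p, y p - x p - z p, 2 * z p] : Fin 3 → ℝ) i := by
    intro p
    refine coord_eq B2 p _ ?_ ?_
    · simp [Fin.sum_univ_three]; linarith [hsum p]
    · show (2 * x p) • m + (y p - x p - z p) • b + (2 * z p) • n = p
      rw [hm, hn]; conv_rhs => rw [← hp p]
      module
  have c3 : ∀ (p : (EuclideanSpace ℝ (Fin 2))) (i : Fin 3),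
      B3.coord i p = (![2 * (y p - x p), 1 - 2 * y p, 2 * x p] : Fin 3 → ℝ) i := by
    intro p
    refine coord_eq B3 p _ ?_ ?_
    · simp [Fin.sum_univ_three]; ring
    · show (2 * (y p - x p)) • n + (1 - 2 * y p) • c + (2 * x p) • m = p
      rw [hm, hn]; conv_rhs => rw [← hp p]
      match_scalars <;> linarith [hsum p]
  -- set identifications
  have r0 : ({a, b, c} : Set (EuclideanSpace ℝ (Fin 2))) = Set.range ⇑B := by
    show _ = Set.range ![a, b, c]
    ext q
    simp only [Matrix.range_cons, Matrix.range_empty, Set.union_empty, Set.mem_union,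
      Set.mem_insert_iff, Set.mem_singleton_iff]
  have r1 : ({a, m, c} : Set (EuclideanSpace ℝ (Fin 2))) = Set.range ⇑B1 := by
    show _ = Set.range ![a, m, c]
    ext q
    simp only [Matrix.range_cons, Matrix.range_empty, Set.union_empty, Set.mem_union,
      Set.mem_insert_iff, Set.mem_singleton_iff]
  have r2 : ({m, b, n} : Set (EuclideanSpace ℝ (Fin 2))) = Set.range ⇑B2 := by
    show _ = Set.range ![m, b, n]
    ext q
    simp only [Matrix.range_cons, Matrix.range_empty, Set.union_empty, Set.mem_union,
      Set.mem_insert_iff, Set.mem_singleton_iff]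
  have r3 : ({n, c, m} : Set (EuclideanSpace ℝ (Fin 2))) = Set.range ⇑B3 := by
    show _ = Set.range ![n, c, m]
    ext q
    simp only [Matrix.range_cons, Matrix.range_empty, Set.union_empty, Set.mem_union,
      Set.mem_insert_iff, Set.mem_singleton_iff]
  -- membership characterizations
  have mem0 : ∀ p : (EuclideanSpace ℝ (Fin 2)), p ∈ convexHull ℝ ({a, b, c} : Set (EuclideanSpace ℝ (Fin 2))) ↔
      0 ≤ x p ∧ 0 ≤ y p ∧ 0 ≤ z p := by
    intro p
    rw [r0, B.convexHull_eq_nonneg_coord, Set.mem_setOf_eq]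
    constructor
    · intro H; exact ⟨H 0, H 1, H 2⟩
    · rintro ⟨h0, h1, h2⟩; exact forall_fin3 h0 h1 h2
  have mem1 : ∀ p : (EuclideanSpace ℝ (Fin 2)), p ∈ convexHull ℝ ({a, m, c} : Set (EuclideanSpace ℝ (Fin 2))) ↔
      0 ≤ x p - y p ∧ 0 ≤ y p ∧ 0 ≤ z p := by
    intro p
    rw [r1, B1.convexHull_eq_nonneg_coord, Set.mem_setOf_eq]
    constructor
    · intro H
      have h0 := H 0; have h1 := H 1; have h2 := H 2
      rw [c1 p 0] at h0; rw [c1 p 1] at h1; rw [c1 p 2] at h2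
      simp only [Matrix.cons_val_zero, Matrix.cons_val_one, Matrix.head_cons,
        Matrix.cons_val_two, Matrix.tail_cons] at h0 h1 h2
      exact ⟨h0, by linarith, h2⟩
    · rintro ⟨h0, h1, h2⟩
      refine forall_fin3 ?_ ?_ ?_
      · rw [c1 p 0]; simp only [Matrix.cons_val_zero]; linarith
      · rw [c1 p 1]; simp only [Matrix.cons_val_one, Matrix.head_cons, Matrix.cons_val_zero]; linarith
      · rw [c1 p 2]; simp only [Matrix.cons_val_two, Matrix.tail_cons, Matrix.head_cons]
        linarith
  have mem2 : ∀ p : (EuclideanSpace ℝ (Fin 2)), p ∈ convexHull ℝ ({m, b, n} : Set (EuclideanSpace ℝ (Fin 2))) ↔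
      0 ≤ x p ∧ 0 ≤ y p - x p - z p ∧ 0 ≤ z p := by
    intro p
    rw [r2, B2.convexHull_eq_nonneg_coord, Set.mem_setOf_eq]
    constructor
    · intro H
      have h0 := H 0; have h1 := H 1; have h2 := H 2
      rw [c2 p 0] at h0; rw [c2 p 1] at h1; rw [c2 p 2] at h2
      simp only [Matrix.cons_val_zero, Matrix.cons_val_one, Matrix.head_cons,
        Matrix.cons_val_two, Matrix.tail_cons] at h0 h1 h2
      exact ⟨by linarith, h1, by linarith⟩
    · rintro ⟨h0, h1, h2⟩
      refine forall_fin3 ?_ ?_ ?_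
      · rw [c2 p 0]; simp only [Matrix.cons_val_zero]; linarith
      · rw [c2 p 1]; simp only [Matrix.cons_val_one, Matrix.head_cons, Matrix.cons_val_zero]; linarith
      · rw [c2 p 2]; simp only [Matrix.cons_val_two, Matrix.tail_cons, Matrix.head_cons]
        linarith
  have mem3 : ∀ p : (EuclideanSpace ℝ (Fin 2)), p ∈ convexHull ℝ ({n, c, m} : Set (EuclideanSpace ℝ (Fin 2))) ↔
      0 ≤ y p - x p ∧ y p ≤ 2⁻¹ ∧ 0 ≤ x p := by
    intro p
    rw [r3, B3.convexHull_eq_nonneg_coord, Set.mem_setOf_eq]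
    constructor
    · intro H
      have h0 := H 0; have h1 := H 1; have h2 := H 2
      rw [c3 p 0] at h0; rw [c3 p 1] at h1; rw [c3 p 2] at h2
      simp only [Matrix.cons_val_zero, Matrix.cons_val_one, Matrix.head_cons,
        Matrix.cons_val_two, Matrix.tail_cons] at h0 h1 h2
      exact ⟨by linarith, by linarith, by linarith⟩
    · rintro ⟨h0, h1, h2⟩
      refine forall_fin3 ?_ ?_ ?_
      · rw [c3 p 0]; simp only [Matrix.cons_val_zero]; linarith
      · rw [c3 p 1]; simp only [Matrix.cons_val_one, Matrix.head_cons, Matrix.cons_val_zero]; linarith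
      · rw [c3 p 2]; simp only [Matrix.cons_val_two, Matrix.tail_cons, Matrix.head_cons]
        linarith
  -- interior characterizations
  have int1 : ∀ p : (EuclideanSpace ℝ (Fin 2)), p ∈ interior (convexHull ℝ ({a, m, c} : Set (EuclideanSpace ℝ (Fin 2)))) ↔
      0 < x p - y p ∧ 0 < y p ∧ 0 < z p := by
    intro p
    rw [r1, B1.interior_convexHull, Set.mem_setOf_eq]
    constructor
    · intro H
      have h0 := H 0; have h1 := H 1; have h2 := H 2
      rw [c1 p 0] at h0; rw [c1 p 1] at h1; rw [c1 p 2] at h2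
      simp only [Matrix.cons_val_zero, Matrix.cons_val_one, Matrix.head_cons,
        Matrix.cons_val_two, Matrix.tail_cons] at h0 h1 h2
      exact ⟨h0, by linarith, h2⟩
    · rintro ⟨h0, h1, h2⟩
      refine forall_fin3 ?_ ?_ ?_
      · rw [c1 p 0]; simp only [Matrix.cons_val_zero]; linarith
      · rw [c1 p 1]; simp only [Matrix.cons_val_one, Matrix.head_cons, Matrix.cons_val_zero]; linarith
      · rw [c1 p 2]; simp only [Matrix.cons_val_two, Matrix.tail_cons, Matrix.head_cons]
        linarith
  have int2 : ∀ p : (EuclideanSpace ℝ (Fin 2)), p ∈ interior (convexHull ℝ ({m, b, n} : Set (EuclideanSpace ℝ (Fin 2)))) ↔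
      0 < x p ∧ 0 < y p - x p - z p ∧ 0 < z p := by
    intro p
    rw [r2, B2.interior_convexHull, Set.mem_setOf_eq]
    constructor
    · intro H
      have h0 := H 0; have h1 := H 1; have h2 := H 2
      rw [c2 p 0] at h0; rw [c2 p 1] at h1; rw [c2 p 2] at h2
      simp only [Matrix.cons_val_zero, Matrix.cons_val_one, Matrix.head_cons,
        Matrix.cons_val_two, Matrix.tail_cons] at h0 h1 h2
      exact ⟨by linarith, h1, by linarith⟩
    · rintro ⟨h0, h1, h2⟩
      refine forall_fin3 ?_ ?_ ?_
      · rw [c2 p 0]; simp only [Matrix.cons_val_zero]; linarith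
      · rw [c2 p 1]; simp only [Matrix.cons_val_one, Matrix.head_cons, Matrix.cons_val_zero]; linarith
      · rw [c2 p 2]; simp only [Matrix.cons_val_two, Matrix.tail_cons, Matrix.head_cons]
        linarith
  have int3 : ∀ p : (EuclideanSpace ℝ (Fin 2)), p ∈ interior (convexHull ℝ ({n, c, m} : Set (EuclideanSpace ℝ (Fin 2)))) ↔
      0 < y p - x p ∧ y p < 2⁻¹ ∧ 0 < x p := by
    intro p
    rw [r3, B3.interior_convexHull, Set.mem_setOf_eq]
    constructor
    · intro H
      have h0 := H 0; have h1 := H 1; have h2 := H 2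
      rw [c3 p 0] at h0; rw [c3 p 1] at h1; rw [c3 p 2] at h2
      simp only [Matrix.cons_val_zero, Matrix.cons_val_one, Matrix.head_cons,
        Matrix.cons_val_two, Matrix.tail_cons] at h0 h1 h2
      exact ⟨by linarith, by linarith, by linarith⟩
    · rintro ⟨h0, h1, h2⟩
      refine forall_fin3 ?_ ?_ ?_
      · rw [c3 p 0]; simp only [Matrix.cons_val_zero]; linarith
      · rw [c3 p 1]; simp only [Matrix.cons_val_one, Matrix.head_cons, Matrix.cons_val_zero]; linarith
      · rw [c3 p 2]; simp only [Matrix.cons_val_two, Matrix.tail_cons, Matrix.head_cons]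
        linarith
  refine ⟨?_, ?_, ?_, ?_⟩
  · ext p
    simp only [Set.mem_union, mem0, mem1, mem2, mem3]
    constructor
    · rintro ((⟨h0, h1, h2⟩ | ⟨h0, h1, h2⟩) | ⟨h0, h1, h2⟩) <;>
        refine ⟨by linarith, by linarith, by linarith [hsum p]⟩
    · rintro ⟨h0, h1, h2⟩
      by_cases hyx : y p ≤ x p
      · exact Or.inl (Or.inl ⟨by linarith, h1, h2⟩)
      · by_cases hy2 : (2:ℝ)⁻¹ ≤ y p
        · exact Or.inl (Or.inr ⟨h0, by linarith [hsum p], h2⟩)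
        · exact Or.inr ⟨by linarith, by linarith, h0⟩
  · rw [Set.disjoint_left]
    intro p hp1 hp2
    rw [int1] at hp1; rw [int2] at hp2
    obtain ⟨a1, a2, a3⟩ := hp1; obtain ⟨b1, b2, b3⟩ := hp2
    linarith
  · rw [Set.disjoint_left]
    intro p hp1 hp3
    rw [int1] at hp1; rw [int3] at hp3
    obtain ⟨a1, a2, a3⟩ := hp1; obtain ⟨b1, b2, b3⟩ := hp3
    linarith
  · rw [Set.disjoint_left]
    intro p hp2 hp3
    rw [int2] at hp2; rw [int3] at hp3
    obtain ⟨a1, a2, a3⟩ := hp2; obtain ⟨b1, b2, b3⟩ := hp3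
    linarith [hsum p]
end

section
/- Let a, b, c be affinely independent points in the Euclidean plane, let m denote the midpoint of the segment ab and n the midpoint of the segment bc. Then the blue refinement of (a, b, c) coincides with the result of applying two successive green refinements: the family of vertex sets of the three blue subtriangles, {{a, m, c}, {m, b, n}, {n, c, m}}, equals the family obtained by first green-refining (a, b, c) at the midpoint m of ab into (a, m, c) and (m, b, c), and then green-refining the child (m, b, c) at the midpoint n of its edge bc into (m, b, n)... (n, c, m); equivalently, convexHull{m, b, n} ∪ convexHull{n, c, m} = convexHull{m, b, c} and convexHull{a, m, c} ∪ convexHull{m, b, c} = convexHull{a, b, c}, with the interiors of all three blue subtriangles contained in the interior of convexHull{a, b, c}. (A blue pattern arises from two subsequent bisections, so removing a blue pattern can be realized as a two-step removal of green patterns.) -/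
open Set

variable {E : Type*} [AddCommGroup E] [Module ℝ E]

lemma seg_split (p q : E) :
    segment ℝ p q = segment ℝ p (midpoint ℝ p q) ∪ segment ℝ (midpoint ℝ p q) q := by
  have hm : midpoint ℝ p q ∈ segment ℝ p q := midpoint_mem_segment p q
  apply Subset.antisymm
  · rintro z ⟨u, v, hu, hv, huv, rfl⟩
    have hmid : midpoint ℝ p q = (2⁻¹ : ℝ) • p + (2⁻¹ : ℝ) • q := by
      rw [midpoint_eq_smul_add, invOf_eq_inv, smul_add]
    rcases le_or_gt v 2⁻¹ with hv2 | hv2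
    · left
      refine ⟨u - v, 2 * v, by linarith, by positivity, by linarith, ?_⟩
      rw [hmid]
      match_scalars <;> ring
    · right
      refine ⟨2 * u, v - u, by linarith, by linarith, by linarith, ?_⟩
      rw [hmid]
      match_scalars <;> ring
  · exact union_subset
      ((convex_segment p q).segment_subset (left_mem_segment ℝ p q) hm)
      ((convex_segment p q).segment_subset hm (right_mem_segment ℝ p q))

lemma hull_split (p q r : E) :
    convexHull ℝ {p, midpoint ℝ p q, r} ∪ convexHull ℝ {midpoint ℝ p q, q, r}
      = convexHull ℝ ({p, q, r} : Set E) := by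
  set m := midpoint ℝ p q with hm
  have h1 : ({p, m, r} : Set E) = insert r {p, m} := by ext x; simp; tauto
  have h2 : ({m, q, r} : Set E) = insert r {m, q} := by ext x; simp; tauto
  have h3 : ({p, q, r} : Set E) = insert r {p, q} := by ext x; simp; tauto
  rw [h1, h2, h3, convexHull_insert (insert_nonempty _ _),
    convexHull_insert (insert_nonempty _ _), convexHull_insert (insert_nonempty _ _),
    convexHull_pair, convexHull_pair, convexHull_pair, ← convexJoin_union_right,
    ← seg_split]


/-- A blue refinement coincides with the result of two successive green
refinements: the family of vertex sets of the three blue subtriangles equals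
the family obtained by first green-refining (a, b, c) at the midpoint m of ab
and then green-refining the child (m, b, c) at the midpoint n of bc;
equivalently, the two finer subtriangles reunite to the intermediate green
child and the green children reunite to the original triangle, with the
interiors of all three blue subtriangles contained in the interior of the
original triangle. -/
theorem blue_refinement_two_greens
    (a b c m n : EuclideanSpace ℝ (Fin 2))
    (h : AffineIndependent ℝ ![a, b, c])
    (hm : m = midpoint ℝ a b) (hn : n = midpoint ℝ b c) :
    ({{a, m, c}, {m, b, n}, {n, c, m}} : Set (Set (EuclideanSpace ℝ (Fin 2)))) =
      {{a, m, c}} ∪ {{b, n, m}, {n, c, m}} ∧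
    convexHull ℝ {m, b, n} ∪ convexHull ℝ {n, c, m} = convexHull ℝ {m, b, c} ∧
    convexHull ℝ {a, m, c} ∪ convexHull ℝ {m, b, c} = convexHull ℝ {a, b, c} ∧
    interior (convexHull ℝ {a, m, c}) ⊆ interior (convexHull ℝ {a, b, c}) ∧
    interior (convexHull ℝ {m, b, n}) ⊆ interior (convexHull ℝ {a, b, c}) ∧
    interior (convexHull ℝ {n, c, m}) ⊆ interior (convexHull ℝ {a, b, c}) := by
  have e1 : ({m, b, n} : Set (EuclideanSpace ℝ (Fin 2))) = {b, n, m} := by ext x; simp; tauto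
  have e2 : ({m, b, c} : Set (EuclideanSpace ℝ (Fin 2))) = {b, c, m} := by ext x; simp; tauto
  have ha : a ∈ convexHull ℝ ({a, b, c} : Set (EuclideanSpace ℝ (Fin 2))) :=
    subset_convexHull ℝ _ (by simp)
  have hb : b ∈ convexHull ℝ ({a, b, c} : Set (EuclideanSpace ℝ (Fin 2))) :=
    subset_convexHull ℝ _ (by simp)
  have hc : c ∈ convexHull ℝ ({a, b, c} : Set (EuclideanSpace ℝ (Fin 2))) :=
    subset_convexHull ℝ _ (by simp)
  have hmem : m ∈ convexHull ℝ ({a, b, c} : Set (EuclideanSpace ℝ (Fin 2))) := by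
    rw [hm]
    exact (convex_convexHull ℝ _).segment_subset ha hb (midpoint_mem_segment a b)
  have hnem : n ∈ convexHull ℝ ({a, b, c} : Set (EuclideanSpace ℝ (Fin 2))) := by
    rw [hn]
    exact (convex_convexHull ℝ _).segment_subset hb hc (midpoint_mem_segment b c)
  refine ⟨?_, ?_, ?_, ?_, ?_, ?_⟩
  · rw [e1, Set.singleton_union]
  · rw [e1, e2, hn]
    exact hull_split b c m
  · rw [hm]
    exact hull_split a b c
  · exact interior_mono (convexHull_min (by
      rintro x (rfl | rfl | rfl) <;> first | exact ha | exact hmem | exact hc)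
      (convex_convexHull ℝ _))
  · exact interior_mono (convexHull_min (by
      rintro x (rfl | rfl | rfl) <;> first | exact hmem | exact hb | exact hnem)
      (convex_convexHull ℝ _))
  · exact interior_mono (convexHull_min (by
      rintro x (rfl | rfl | rfl) <;> first | exact hnem | exact hc | exact hmem)
      (convex_convexHull ℝ _))
end
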